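/- Let k ≥ 3 and 0 ≤ i ≤ k with 4 ≤ i ≤ k−4. If f(k,i−1) < m ≤ f(k,i) and f(k,k−i−1) < n ≤ f(k,k−i), where f(α,β) = α − 1 + C(max{β−1,2},2), then sg(K_{n,m}) = k. -/

import Mathlib

/-- A selection of fixed geodesics between pairs of vertices of `S`:
each element of `P` is a walk whose endpoints lie in `S`, which is a shortest path,
with at most one walk per ordered pair of endpoints, and with the walks chosen for
the two orderings of a pair being reverses of each other. -/
def IsGeodesicSelection {V : Type*} (G : SimpleGraph V) (S : Set V)
    (P : Set ((u : V) × (v : V) × G.Walk u v)) : Prop :=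
  (∀ q ∈ P, q.1 ∈ S ∧ q.2.1 ∈ S ∧ q.2.2.IsPath ∧ q.2.2.length = G.dist q.1 q.2.1) ∧
  (∀ q ∈ P, ∀ q' ∈ P,
    (q.1 = q'.1 ∧ q.2.1 = q'.2.1 → q = q') ∧
    (q.1 = q'.2.1 ∧ q.2.1 = q'.1 → q.2.2.support = q'.2.2.support.reverse))

/-- `S` is a strong geodetic set of `G` if one can fix one shortest path between
each pair of vertices of `S` so that all vertices of `G` are covered. -/
def IsStrongGeodeticSet {V : Type*} (G : SimpleGraph V) (S : Set V) : Prop :=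
  ∃ P, IsGeodesicSelection G S P ∧ ∀ w : V, ∃ q ∈ P, w ∈ q.2.2.support

/-- The strong geodetic number: minimum size of a strong geodetic set. -/
noncomputable def strongGeodeticNumber {V : Type*} (G : SimpleGraph V) : ℕ :=
  sInf {k | ∃ S : Set V, S.ncard = k ∧ IsStrongGeodeticSet G S}

/-- `f(α,β) = α - 1 + C(max(β-1,2), 2)`. -/
def sgF (a b : ℕ) : ℕ := a - 1 + (max (b - 1) 2).choose 2

section SGhelpers
open SimpleGraph Sum

lemma cbg_dist_le_two {n m : ℕ} (hn : 0 < n) (hm : 0 < m) (a b : Fin n ⊕ Fin m) :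
    (completeBipartiteGraph (Fin n) (Fin m)).dist a b ≤ 2 := by
  set G := completeBipartiteGraph (Fin n) (Fin m)
  match a, b with
  | inl x, inl y =>
    rcases eq_or_ne x y with rfl | hxy
    · simp [SimpleGraph.dist_self]
    · have h1 : G.Adj (inl x) (inr ⟨0, hm⟩) := Or.inl ⟨rfl, rfl⟩
      have h2 : G.Adj (inr ⟨0, hm⟩) (inl y) := Or.inr ⟨rfl, rfl⟩
      simpa using SimpleGraph.dist_le (Walk.cons h1 (Walk.cons h2 Walk.nil))
  | inl x, inr y =>
    have h1 : G.Adj (inl x) (inr y) := Or.inl ⟨rfl, rfl⟩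
    calc G.dist _ _ ≤ _ := SimpleGraph.dist_le (Walk.cons h1 Walk.nil)
    _ ≤ 2 := by simp
  | inr x, inl y =>
    have h1 : G.Adj (inr x) (inl y) := Or.inr ⟨rfl, rfl⟩
    calc G.dist _ _ ≤ _ := SimpleGraph.dist_le (Walk.cons h1 Walk.nil)
    _ ≤ 2 := by simp
  | inr x, inr y =>
    rcases eq_or_ne x y with rfl | hxy
    · simp [SimpleGraph.dist_self]
    · have h1 : G.Adj (inr x) (inl ⟨0, hn⟩) := Or.inr ⟨rfl, rfl⟩
      have h2 : G.Adj (inl ⟨0, hn⟩) (inr y) := Or.inl ⟨rfl, rfl⟩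
      simpa using SimpleGraph.dist_le (Walk.cons h1 (Walk.cons h2 Walk.nil))

lemma cbg_dist_inr_inr {n m : ℕ} (hn : 0 < n) (hm : 0 < m) {u v : Fin m} (huv : u ≠ v) :
    (completeBipartiteGraph (Fin n) (Fin m)).dist (inr u) (inr v) = 2 := by
  set G := completeBipartiteGraph (Fin n) (Fin m)
  have h2 : G.dist (inr u) (inr v) ≤ 2 := cbg_dist_le_two hn hm _ _
  have h1 : G.Adj (inr u) (inl ⟨0, hn⟩) := Or.inr ⟨rfl, rfl⟩
  have h1' : G.Adj (inl ⟨0, hn⟩) (inr v) := Or.inl ⟨rfl, rfl⟩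
  have hr : G.Reachable (inr u) (inr v) := ⟨Walk.cons h1 (Walk.cons h1' Walk.nil)⟩
  have h0 : G.dist (inr u) (inr v) ≠ 0 := by
    intro h
    rcases SimpleGraph.dist_eq_zero_iff_eq_or_not_reachable.mp h with h' | h'
    · exact huv (by simpa using h')
    · exact h' hr
  have hA : ¬ G.Adj (inr u) (inr v) := by
    rintro (⟨h, -⟩ | ⟨-, h⟩) <;> simp at h
  have h1'' : G.dist (inr u) (inr v) ≠ 1 := by
    intro h; exact hA (SimpleGraph.dist_eq_one_iff_adj.mp h)
  omega

lemma cbg_dist_inl_inl {n m : ℕ} (hn : 0 < n) (hm : 0 < m) {u v : Fin n} (huv : u ≠ v) :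
    (completeBipartiteGraph (Fin n) (Fin m)).dist (inl u) (inl v) = 2 := by
  set G := completeBipartiteGraph (Fin n) (Fin m)
  have h2 : G.dist (inl u) (inl v) ≤ 2 := cbg_dist_le_two hn hm _ _
  have h1 : G.Adj (inl u) (inr ⟨0, hm⟩) := Or.inl ⟨rfl, rfl⟩
  have h1' : G.Adj (inr ⟨0, hm⟩) (inl v) := Or.inr ⟨rfl, rfl⟩
  have hr : G.Reachable (inl u) (inl v) := ⟨Walk.cons h1 (Walk.cons h1' Walk.nil)⟩
  have h0 : G.dist (inl u) (inl v) ≠ 0 := by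
    intro h
    rcases SimpleGraph.dist_eq_zero_iff_eq_or_not_reachable.mp h with h' | h'
    · exact huv (by simpa using h')
    · exact h' hr
  have hA : ¬ G.Adj (inl u) (inl v) := by
    rintro (⟨-, h⟩ | ⟨h, -⟩) <;> simp at h
  have h1'' : G.dist (inl u) (inl v) ≠ 1 := by
    intro h; exact hA (SimpleGraph.dist_eq_one_iff_adj.mp h)
  omega


/-- Structure of a geodesic covering a non-chosen left vertex. -/
lemma mid_structure_left {n m : ℕ} (hn : 0 < n) (hm : 0 < m)
    {S : Set (Fin n ⊕ Fin m)}
    {P : Set ((u : Fin n ⊕ Fin m) × (v : Fin n ⊕ Fin m) ×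
      (completeBipartiteGraph (Fin n) (Fin m)).Walk u v)}
    (hP : IsGeodesicSelection (completeBipartiteGraph (Fin n) (Fin m)) S P)
    {q} (hq : q ∈ P) {x : Fin n} (hx : Sum.inl x ∈ q.2.2.support) (hxS : Sum.inl x ∉ S) :
    ∃ u v : Fin m, u ≠ v ∧ Sum.inr u ∈ S ∧ Sum.inr v ∈ S ∧ q.1 = Sum.inr u ∧
      q.2.1 = Sum.inr v ∧ q.2.2.support = [Sum.inr u, Sum.inl x, Sum.inr v] := by
  obtain ⟨hS1, hS2, hpath, hlen⟩ := hP.1 q hq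
  obtain ⟨a, b, w⟩ := q
  simp only at hS1 hS2 hpath hlen hx ⊢
  have hd : (completeBipartiteGraph (Fin n) (Fin m)).dist a b ≤ 2 := cbg_dist_le_two hn hm a b
  cases w with
  | nil =>
    simp only [Walk.support_nil, List.mem_singleton] at hx
    exact absurd (hx ▸ hS1) hxS
  | cons h p =>
    cases p with
    | nil =>
      simp only [Walk.support_cons, Walk.support_nil, List.mem_cons,
        List.not_mem_nil, or_false, List.mem_singleton] at hx
      rcases hx with hx | hx
      · exact absurd (hx ▸ hS1) hxS
      · exact absurd (hx ▸ hS2) hxS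
    | cons h' p' =>
      cases p' with
      | nil =>
        rename_i c
        simp only [Walk.support_cons, Walk.support_nil, List.mem_cons,
          List.not_mem_nil, or_false, List.mem_singleton] at hx
        have hcx : Sum.inl x = c := by
          rcases hx with hx | hx | hx
          · exact absurd (hx ▸ hS1) hxS
          · exact hx
          · exact absurd (hx ▸ hS2) hxS
        subst hcx
        obtain ⟨u, rfl⟩ : ∃ u, a = Sum.inr u := by
          rcases h with ⟨h1, h2⟩ | ⟨h1, h2⟩
          · simp at h2
          · cases a with
            | inl z => simp at h1
            | inr z => exact ⟨z, rfl⟩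
        obtain ⟨v, rfl⟩ : ∃ v, b = Sum.inr v := by
          rcases h' with ⟨h1, h2⟩ | ⟨h1, h2⟩
          · cases b with
            | inl z => simp at h2
            | inr z => exact ⟨z, rfl⟩
          · simp at h1
        refine ⟨u, v, ?_, hS1, hS2, rfl, rfl, by simp⟩
        have hnd := hpath.support_nodup
        simp only [Walk.support_cons, Walk.support_nil] at hnd
        intro huv
        subst huv
        simp at hnd
      | cons h'' p'' =>
        exfalso
        simp only [Walk.length_cons] at hlen
        omega

open scoped Classical in
lemma lower_left {n m : ℕ} (hn : 0 < n) (hm : 0 < m)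
    {S : Set (Fin n ⊕ Fin m)} (hS : IsStrongGeodeticSet (completeBipartiteGraph (Fin n) (Fin m)) S) :
    n ≤ (Finset.univ.filter fun x : Fin n => Sum.inl x ∈ S).card
        + ((Finset.univ.filter fun y : Fin m => Sum.inr y ∈ S).card).choose 2 := by
  classical
  obtain ⟨P, hP, hcov⟩ := hS
  set A := (Finset.univ.filter fun x : Fin n => Sum.inl x ∈ S) with hA
  set B := (Finset.univ.filter fun y : Fin m => Sum.inr y ∈ S) with hB
  set Ac := (Finset.univ.filter fun x : Fin n => ¬ (Sum.inl x ∈ S)) with hAc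
  have hcards : A.card + Ac.card = n := by
    rw [hA, hAc, Finset.card_filter_add_card_filter_not]
    simp
  -- relation: x is the middle of the chosen geodesic with right endpoints {u,v}
  have hR : ∀ x : Fin n, Sum.inl x ∉ S → ∃ t : Finset (Fin m),
      ∃ q ∈ P, ∃ u v : Fin m, u ≠ v ∧ t = {u, v} ∧ Sum.inr u ∈ S ∧ Sum.inr v ∈ S ∧
        q.1 = Sum.inr u ∧ q.2.1 = Sum.inr v ∧
        q.2.2.support = [Sum.inr u, Sum.inl x, Sum.inr v] := by
    intro x hx
    obtain ⟨q, hq, hxq⟩ := hcov (Sum.inl x)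
    obtain ⟨u, v, huv, hu, hv, h1, h2, h3⟩ := mid_structure_left hn hm hP hq hxq hx
    exact ⟨{u, v}, q, hq, u, v, huv, rfl, hu, hv, h1, h2, h3⟩
  set f : Fin n → Finset (Fin m) := fun x =>
    if h : Sum.inl x ∉ S then (hR x h).choose else ∅ with hf
  have hmaps : ∀ x ∈ Ac, f x ∈ B.powersetCard 2 := by
    intro x hx
    rw [hAc, Finset.mem_filter] at hx
    obtain ⟨q, hq, u, v, huv, ht, hu, hv, -⟩ := (hR x hx.2).choose_spec
    rw [hf]
    simp only [dif_pos hx.2]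
    rw [Finset.mem_powersetCard]
    constructor
    · rw [ht]
      intro z hz
      simp only [Finset.mem_insert, Finset.mem_singleton] at hz
      rcases hz with rfl | rfl <;> simp [hB, hu, hv]
    · rw [ht, Finset.card_insert_of_notMem (by simpa using huv), Finset.card_singleton]
  have hinj : Set.InjOn f Ac := by
    intro x hx x' hx' hfxx'
    rw [Finset.coe_filter, Set.mem_setOf_eq] at hx hx'
    obtain ⟨q, hq, u, v, huv, ht, hu, hv, he1, he2, hsupp⟩ := (hR x hx.2).choose_spec
    obtain ⟨q', hq', u', v', huv', ht', hu', hv', he1', he2', hsupp'⟩ := (hR x' hx'.2).choose_spec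
    rw [hf] at hfxx'
    simp only [dif_pos hx.2, dif_pos hx'.2] at hfxx'
    have htt : ({u, v} : Finset (Fin m)) = {u', v'} := by rw [← ht, ← ht', hfxx']
    have hcases : (u = u' ∧ v = v') ∨ (u = v' ∧ v = u') := by
      have h1 : u ∈ ({u', v'} : Finset (Fin m)) := htt ▸ Finset.mem_insert_self u {v}
      have h2 : v ∈ ({u', v'} : Finset (Fin m)) := htt ▸ (by simp : v ∈ ({u, v} : Finset (Fin m)))
      simp only [Finset.mem_insert, Finset.mem_singleton] at h1 h2
      rcases h1 with rfl | rfl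
      · rcases h2 with rfl | rfl
        · exact absurd rfl huv
        · exact Or.inl ⟨rfl, rfl⟩
      · rcases h2 with rfl | rfl
        · exact Or.inr ⟨rfl, rfl⟩
        · exact absurd rfl huv
    rcases hcases with ⟨rfl, rfl⟩ | ⟨rfl, rfl⟩
    · have hqq : q = q' := (hP.2 q hq q' hq').1 ⟨he1.trans he1'.symm, he2.trans he2'.symm⟩
      rw [hqq, hsupp'] at hsupp
      simpa using hsupp.symm
    · have hrev := (hP.2 q hq q' hq').2 ⟨he1.trans he2'.symm, he2.trans he1'.symm⟩
      rw [hsupp, hsupp'] at hrev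
      simp only [List.reverse_cons, List.reverse_nil] at hrev
      simpa using hrev
  have hle : Ac.card ≤ (B.powersetCard 2).card :=
    Finset.card_le_card_of_injOn f hmaps hinj
  rw [Finset.card_powersetCard] at hle
  omega

lemma mid_structure_right {n m : ℕ} (hn : 0 < n) (hm : 0 < m)
    {S : Set (Fin n ⊕ Fin m)}
    {P : Set ((u : Fin n ⊕ Fin m) × (v : Fin n ⊕ Fin m) ×
      (completeBipartiteGraph (Fin n) (Fin m)).Walk u v)}
    (hP : IsGeodesicSelection (completeBipartiteGraph (Fin n) (Fin m)) S P)
    {q} (hq : q ∈ P) {y : Fin m} (hy : Sum.inr y ∈ q.2.2.support) (hyS : Sum.inr y ∉ S) :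
    ∃ u v : Fin n, u ≠ v ∧ Sum.inl u ∈ S ∧ Sum.inl v ∈ S ∧ q.1 = Sum.inl u ∧
      q.2.1 = Sum.inl v ∧ q.2.2.support = [Sum.inl u, Sum.inr y, Sum.inl v] := by
  obtain ⟨hS1, hS2, hpath, hlen⟩ := hP.1 q hq
  obtain ⟨a, b, w⟩ := q
  simp only at hS1 hS2 hpath hlen hy ⊢
  have hd : (completeBipartiteGraph (Fin n) (Fin m)).dist a b ≤ 2 := cbg_dist_le_two hn hm a b
  cases w with
  | nil =>
    simp only [Walk.support_nil, List.mem_singleton] at hy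
    exact absurd (hy ▸ hS1) hyS
  | cons h p =>
    cases p with
    | nil =>
      simp only [Walk.support_cons, Walk.support_nil, List.mem_cons,
        List.not_mem_nil, or_false, List.mem_singleton] at hy
      rcases hy with hy | hy
      · exact absurd (hy ▸ hS1) hyS
      · exact absurd (hy ▸ hS2) hyS
    | cons h' p' =>
      cases p' with
      | nil =>
        rename_i c
        simp only [Walk.support_cons, Walk.support_nil, List.mem_cons,
          List.not_mem_nil, or_false, List.mem_singleton] at hy
        have hcy : Sum.inr y = c := by
          rcases hy with hy | hy | hy
          · exact absurd (hy ▸ hS1) hyS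
          · exact hy
          · exact absurd (hy ▸ hS2) hyS
        subst hcy
        obtain ⟨u, rfl⟩ : ∃ u, a = Sum.inl u := by
          rcases h with ⟨h1, h2⟩ | ⟨h1, h2⟩
          · cases a with
            | inl z => exact ⟨z, rfl⟩
            | inr z => simp at h1
          · simp at h2
        obtain ⟨v, rfl⟩ : ∃ v, b = Sum.inl v := by
          rcases h' with ⟨h1, h2⟩ | ⟨h1, h2⟩
          · simp at h1
          · cases b with
            | inl z => exact ⟨z, rfl⟩
            | inr z => simp at h2
        refine ⟨u, v, ?_, hS1, hS2, rfl, rfl, by simp⟩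
        have hnd := hpath.support_nodup
        simp only [Walk.support_cons, Walk.support_nil] at hnd
        intro huv
        subst huv
        simp at hnd
      | cons h'' p'' =>
        exfalso
        simp only [Walk.length_cons] at hlen
        omega

open scoped Classical in
lemma lower_right {n m : ℕ} (hn : 0 < n) (hm : 0 < m)
    {S : Set (Fin n ⊕ Fin m)} (hS : IsStrongGeodeticSet (completeBipartiteGraph (Fin n) (Fin m)) S) :
    m ≤ (Finset.univ.filter fun y : Fin m => Sum.inr y ∈ S).card
        + ((Finset.univ.filter fun x : Fin n => Sum.inl x ∈ S).card).choose 2 := by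
  classical
  obtain ⟨P, hP, hcov⟩ := hS
  set A := (Finset.univ.filter fun x : Fin n => Sum.inl x ∈ S) with hA
  set B := (Finset.univ.filter fun y : Fin m => Sum.inr y ∈ S) with hB
  set Bc := (Finset.univ.filter fun y : Fin m => ¬ (Sum.inr y ∈ S)) with hBc
  have hcards : B.card + Bc.card = m := by
    rw [hB, hBc, Finset.card_filter_add_card_filter_not]
    simp
  have hR : ∀ y : Fin m, Sum.inr y ∉ S → ∃ t : Finset (Fin n),
      ∃ q ∈ P, ∃ u v : Fin n, u ≠ v ∧ t = {u, v} ∧ Sum.inl u ∈ S ∧ Sum.inl v ∈ S ∧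
        q.1 = Sum.inl u ∧ q.2.1 = Sum.inl v ∧
        q.2.2.support = [Sum.inl u, Sum.inr y, Sum.inl v] := by
    intro y hy
    obtain ⟨q, hq, hyq⟩ := hcov (Sum.inr y)
    obtain ⟨u, v, huv, hu, hv, h1, h2, h3⟩ := mid_structure_right hn hm hP hq hyq hy
    exact ⟨{u, v}, q, hq, u, v, huv, rfl, hu, hv, h1, h2, h3⟩
  set f : Fin m → Finset (Fin n) := fun y =>
    if h : Sum.inr y ∉ S then (hR y h).choose else ∅ with hf
  have hmaps : ∀ y ∈ Bc, f y ∈ A.powersetCard 2 := by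
    intro y hy
    rw [hBc, Finset.mem_filter] at hy
    obtain ⟨q, hq, u, v, huv, ht, hu, hv, -⟩ := (hR y hy.2).choose_spec
    rw [hf]
    simp only [dif_pos hy.2]
    rw [Finset.mem_powersetCard]
    constructor
    · rw [ht]
      intro z hz
      simp only [Finset.mem_insert, Finset.mem_singleton] at hz
      rcases hz with rfl | rfl <;> simp [hA, hu, hv]
    · rw [ht, Finset.card_insert_of_notMem (by simpa using huv), Finset.card_singleton]
  have hinj : Set.InjOn f Bc := by
    intro y hy y' hy' hfyy'
    rw [Finset.coe_filter, Set.mem_setOf_eq] at hy hy'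
    obtain ⟨q, hq, u, v, huv, ht, hu, hv, he1, he2, hsupp⟩ := (hR y hy.2).choose_spec
    obtain ⟨q', hq', u', v', huv', ht', hu', hv', he1', he2', hsupp'⟩ := (hR y' hy'.2).choose_spec
    rw [hf] at hfyy'
    simp only [dif_pos hy.2, dif_pos hy'.2] at hfyy'
    have htt : ({u, v} : Finset (Fin n)) = {u', v'} := by rw [← ht, ← ht', hfyy']
    have hcases : (u = u' ∧ v = v') ∨ (u = v' ∧ v = u') := by
      have h1 : u ∈ ({u', v'} : Finset (Fin n)) := htt ▸ Finset.mem_insert_self u {v}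
      have h2 : v ∈ ({u', v'} : Finset (Fin n)) := htt ▸ (by simp : v ∈ ({u, v} : Finset (Fin n)))
      simp only [Finset.mem_insert, Finset.mem_singleton] at h1 h2
      rcases h1 with rfl | rfl
      · rcases h2 with rfl | rfl
        · exact absurd rfl huv
        · exact Or.inl ⟨rfl, rfl⟩
      · rcases h2 with rfl | rfl
        · exact Or.inr ⟨rfl, rfl⟩
        · exact absurd rfl huv
    rcases hcases with ⟨rfl, rfl⟩ | ⟨rfl, rfl⟩
    · have hqq : q = q' := (hP.2 q hq q' hq').1 ⟨he1.trans he1'.symm, he2.trans he2'.symm⟩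
      rw [hqq, hsupp'] at hsupp
      simpa using hsupp.symm
    · have hrev := (hP.2 q hq q' hq').2 ⟨he1.trans he2'.symm, he2.trans he1'.symm⟩
      rw [hsupp, hsupp'] at hrev
      simp only [List.reverse_cons, List.reverse_nil] at hrev
      simpa using hrev
  have hle : Bc.card ≤ (A.powersetCard 2).card :=
    Finset.card_le_card_of_injOn f hmaps hinj
  rw [Finset.card_powersetCard] at hle
  omega

lemma exists_pair_inj {β γ : Type*} [DecidableEq β] [LinearOrder β] [Fintype γ]
    (A : Finset β) (h : Fintype.card γ ≤ A.card.choose 2) :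
    ∃ g : γ → β × β, Function.Injective g ∧
      ∀ x, (g x).1 ∈ A ∧ (g x).2 ∈ A ∧ (g x).1 < (g x).2 := by
  classical
  obtain ⟨e⟩ := Function.Embedding.nonempty_of_card_le
    (α := γ) (β := ↥(A.powersetCard 2))
    (by rw [Fintype.card_coe, Finset.card_powersetCard]; exact h)
  have hmem : ∀ x : γ, (e x : Finset β) ∈ A.powersetCard 2 := fun x => (e x).2
  have hsub : ∀ x : γ, (e x : Finset β) ⊆ A := fun x => (Finset.mem_powersetCard.mp (hmem x)).1
  have hcard2 : ∀ x, (e x : Finset β).card = 2 := fun x => (Finset.mem_powersetCard.mp (hmem x)).2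
  have hne : ∀ x, (e x : Finset β).Nonempty := fun x =>
    Finset.card_pos.mp (by rw [hcard2 x]; norm_num)
  have hlt : ∀ x, (e x : Finset β).min' (hne x) < (e x : Finset β).max' (hne x) := fun x =>
    Finset.min'_lt_max'_of_card _ (by rw [hcard2 x]; norm_num)
  have hrepr : ∀ x, (e x : Finset β) = {(e x : Finset β).min' (hne x), (e x : Finset β).max' (hne x)} := by
    intro x
    refine (Finset.eq_of_subset_of_card_le ?_ ?_).symm
    · exact Finset.insert_subset (Finset.min'_mem _ _) (by simpa using Finset.max'_mem _ (hne x))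
    · rw [hcard2 x, Finset.card_insert_of_notMem (by simpa using (hlt x).ne), Finset.card_singleton]
  refine ⟨fun x => ((e x : Finset β).min' (hne x), (e x : Finset β).max' (hne x)), ?_, ?_⟩
  · intro x y hxy
    rw [Prod.mk.injEq] at hxy
    have : (e x : Finset β) = (e y : Finset β) := by
      rw [hrepr x, hrepr y, hxy.1, hxy.2]
    exact e.injective (Subtype.ext this)
  · intro x
    exact ⟨hsub x (Finset.min'_mem _ (hne x)), hsub x (Finset.max'_mem _ (hne x)), hlt x⟩

/-- the geodesic `inr u — inl x — inr v`. -/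
def midWalkR {n m : ℕ} (u v : Fin m) (x : Fin n) :
    (completeBipartiteGraph (Fin n) (Fin m)).Walk (inr u) (inr v) :=
  have h1 : (completeBipartiteGraph (Fin n) (Fin m)).Adj (inr u) (inl x) := Or.inr ⟨rfl, rfl⟩
  have h2 : (completeBipartiteGraph (Fin n) (Fin m)).Adj (inl x) (inr v) := Or.inl ⟨rfl, rfl⟩
  Walk.cons h1 (Walk.cons h2 Walk.nil)

/-- the geodesic `inl u — inr y — inl v`. -/
def midWalkL {n m : ℕ} (u v : Fin n) (y : Fin m) :
    (completeBipartiteGraph (Fin n) (Fin m)).Walk (inl u) (inl v) :=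
  have h1 : (completeBipartiteGraph (Fin n) (Fin m)).Adj (inl u) (inr y) := Or.inl ⟨rfl, rfl⟩
  have h2 : (completeBipartiteGraph (Fin n) (Fin m)).Adj (inr y) (inl v) := Or.inr ⟨rfl, rfl⟩
  Walk.cons h1 (Walk.cons h2 Walk.nil)

@[simp] lemma midWalkR_support {n m : ℕ} (u v : Fin m) (x : Fin n) :
    (midWalkR u v x).support = [inr u, inl x, inr v] := rfl

@[simp] lemma midWalkL_support {n m : ℕ} (u v : Fin n) (y : Fin m) :
    (midWalkL u v y).support = [inl u, inr y, inl v] := rfl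

lemma card_filter_val_lt (N c : ℕ) (hc : c ≤ N) :
    (Finset.univ.filter fun x : Fin N => x.val < c).card = c := by
  rw [Finset.card_eq_of_bijective (fun j hj => ⟨j, lt_of_lt_of_le hj hc⟩)]
  · intro s hs
    rw [Finset.mem_filter] at hs
    exact ⟨s.val, hs.2, by simp⟩
  · intro j hj
    simp [hj]
  · intro j j' hj hj' hjj'
    simpa [Fin.ext_iff] using hjj'

open scoped Classical in
lemma upper {n m a b : ℕ} (ha2 : 2 ≤ a) (hb2 : 2 ≤ b) (han : a ≤ n) (hbm : b ≤ m)
    (hna : n ≤ a + b.choose 2) (hmb : m ≤ b + a.choose 2) :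
    ∃ S : Set (Fin n ⊕ Fin m), S.ncard = a + b ∧
      IsStrongGeodeticSet (completeBipartiteGraph (Fin n) (Fin m)) S := by
  classical
  set V := Fin n ⊕ Fin m
  set G := completeBipartiteGraph (Fin n) (Fin m) with hG
  set A0 : Finset (Fin n) := Finset.univ.filter (fun x => x.val < a) with hA0
  set B0 : Finset (Fin m) := Finset.univ.filter (fun y => y.val < b) with hB0
  set D : Finset (Fin n) := Finset.univ.filter (fun x => ¬ x.val < a) with hD
  set D' : Finset (Fin m) := Finset.univ.filter (fun y => ¬ y.val < b) with hD'
  have hA0card : A0.card = a := card_filter_val_lt n a han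
  have hB0card : B0.card = b := card_filter_val_lt m b hbm
  have hDcard : D.card = n - a := by
    have := Finset.card_filter_add_card_filter_not
      (s := (Finset.univ : Finset (Fin n))) (p := fun x => x.val < a)
    rw [← hA0, ← hD] at this
    simp only [Finset.card_univ, Fintype.card_fin] at this
    omega
  have hD'card : D'.card = m - b := by
    have := Finset.card_filter_add_card_filter_not
      (s := (Finset.univ : Finset (Fin m))) (p := fun y => y.val < b)
    rw [← hB0, ← hD'] at this
    simp only [Finset.card_univ, Fintype.card_fin] at this
    omega
  obtain ⟨gL, hgLinj, hgL⟩ := exists_pair_inj (γ := ↥D) B0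
    (by rw [Fintype.card_coe, hDcard, hB0card]; omega)
  obtain ⟨gR, hgRinj, hgR⟩ := exists_pair_inj (γ := ↥D') A0
    (by rw [Fintype.card_coe, hD'card, hA0card]; omega)
  set S : Set V := Sum.inl '' {x : Fin n | x.val < a} ∪ Sum.inr '' {y : Fin m | y.val < b}
    with hSdef
  have hSmemL : ∀ x : Fin n, x.val < a → (Sum.inl x : V) ∈ S := by
    intro x hx; exact Or.inl ⟨x, hx, rfl⟩
  have hSmemR : ∀ y : Fin m, y.val < b → (Sum.inr y : V) ∈ S := by
    intro y hy; exact Or.inr ⟨y, hy, rfl⟩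
  have hn1 : 0 < n := lt_of_lt_of_le (by omega) han
  have hm1 : 0 < m := lt_of_lt_of_le (by omega) hbm
  refine ⟨S, ?_, ?_⟩
  · -- cardinality
    rw [hSdef, Set.ncard_union_eq]
    · rw [Set.ncard_image_of_injective _ Sum.inl_injective,
        Set.ncard_image_of_injective _ Sum.inr_injective]
      rw [Set.ncard_eq_toFinset_card', Set.ncard_eq_toFinset_card']
      rw [Set.toFinset_setOf, Set.toFinset_setOf]
      rw [← hA0] at *
      rw [hA0card, card_filter_val_lt m b hbm]
    · rw [Set.disjoint_left]
      rintro z ⟨x, -, rfl⟩ ⟨y, -, hzy⟩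
      simp at hzy
  · -- strong geodetic
    set P : Set ((u : V) × (v : V) × G.Walk u v) :=
      {q | (∃ z ∈ S, q = ⟨z, z, Walk.nil⟩) ∨
           (∃ x : ↥D, q = ⟨Sum.inr (gL x).1, Sum.inr (gL x).2,
              midWalkR (gL x).1 (gL x).2 x.val⟩) ∨
           (∃ y : ↥D', q = ⟨Sum.inl (gR y).1, Sum.inl (gR y).2,
              midWalkL (gR y).1 (gR y).2 y.val⟩)} with hPdef
    refine ⟨P, ⟨?_, ?_⟩, ?_⟩
    · -- each element is a geodesic between vertices of S
      rintro q (⟨z, hz, rfl⟩ | ⟨x, rfl⟩ | ⟨y, rfl⟩)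
      · exact ⟨hz, hz, Walk.IsPath.nil, by simp [SimpleGraph.dist_self]⟩
      · obtain ⟨hu, hv, hlt⟩ := hgL x
        rw [hB0, Finset.mem_filter] at hu hv
        refine ⟨hSmemR _ hu.2, hSmemR _ hv.2, ?_, ?_⟩
        · rw [Walk.isPath_def, midWalkR_support]
          simp [hlt.ne]
        · rw [cbg_dist_inr_inr hn1 hm1 hlt.ne]
          rfl
      · obtain ⟨hu, hv, hlt⟩ := hgR y
        rw [hA0, Finset.mem_filter] at hu hv
        refine ⟨hSmemL _ hu.2, hSmemL _ hv.2, ?_, ?_⟩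
        · rw [Walk.isPath_def, midWalkL_support]
          simp [hlt.ne]
        · rw [cbg_dist_inl_inl hn1 hm1 hlt.ne]
          rfl
    · -- uniqueness / reversal
      rintro q (⟨z, hz, rfl⟩ | ⟨x, rfl⟩ | ⟨y, rfl⟩) q'
        (⟨z', hz', rfl⟩ | ⟨x', rfl⟩ | ⟨y', rfl⟩) <;> constructor
      · rintro ⟨h1, -⟩; simp only at h1; subst h1; rfl
      · rintro ⟨h1, -⟩; simp only at h1; subst h1; simp
      · rintro ⟨h1, h2⟩
        simp only at h1 h2
        rw [h1] at h2
        exact absurd (Sum.inr_injective h2) (hgL x').2.2.ne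
      · rintro ⟨h1, h2⟩
        simp only at h1 h2
        rw [h1] at h2
        exact absurd (Sum.inr_injective h2.symm) (hgL x').2.2.ne
      · rintro ⟨h1, h2⟩
        simp only at h1 h2
        rw [h1] at h2
        exact absurd (Sum.inl_injective h2) (hgR y').2.2.ne
      · rintro ⟨h1, h2⟩
        simp only at h1 h2
        rw [h1] at h2
        exact absurd (Sum.inl_injective h2.symm) (hgR y').2.2.ne
      · rintro ⟨h1, h2⟩
        simp only at h1 h2
        rw [← h1] at h2
        exact absurd (Sum.inr_injective h2.symm) (hgL x).2.2.ne
      · rintro ⟨h1, h2⟩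
        simp only at h1 h2
        rw [← h2] at h1
        exact absurd (Sum.inr_injective h1) (hgL x).2.2.ne
      · rintro ⟨h1, h2⟩
        simp only at h1 h2
        have hx : x = x' := by
          apply hgLinj
          exact Prod.ext (Sum.inr_injective h1) (Sum.inr_injective h2)
        subst hx; rfl
      · rintro ⟨h1, h2⟩
        exfalso
        simp only at h1 h2
        have e1 := Sum.inr_injective h1
        have e2 := Sum.inr_injective h2
        have l1 := (hgL x).2.2
        have l2 := (hgL x').2.2
        rw [e1] at l1
        rw [← e2] at l2
        exact absurd (l1.trans l2) (lt_irrefl _)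
      · rintro ⟨h1, -⟩; simp only at h1; exact absurd h1 (by simp)
      · rintro ⟨h1, -⟩; simp only at h1; exact absurd h1 (by simp)
      · rintro ⟨h1, h2⟩
        simp only at h1 h2
        rw [← h1] at h2
        exact absurd (Sum.inl_injective h2.symm) (hgR y).2.2.ne
      · rintro ⟨h1, h2⟩
        simp only at h1 h2
        rw [← h2] at h1
        exact absurd (Sum.inl_injective h1) (hgR y).2.2.ne
      · rintro ⟨h1, -⟩; simp only at h1; exact absurd h1 (by simp)
      · rintro ⟨h1, -⟩; simp only at h1; exact absurd h1 (by simp)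
      · rintro ⟨h1, h2⟩
        simp only at h1 h2
        have hy : y = y' := by
          apply hgRinj
          exact Prod.ext (Sum.inl_injective h1) (Sum.inl_injective h2)
        subst hy; rfl
      · rintro ⟨h1, h2⟩
        exfalso
        simp only at h1 h2
        have e1 := Sum.inl_injective h1
        have e2 := Sum.inl_injective h2
        have l1 := (hgR y).2.2
        have l2 := (hgR y').2.2
        rw [e1] at l1
        rw [← e2] at l2
        exact absurd (l1.trans l2) (lt_irrefl _)
    · -- covering
      intro w
      match w with
      | Sum.inl x =>
        by_cases hx : x.val < a
        · exact ⟨⟨Sum.inl x, Sum.inl x, Walk.nil⟩, Or.inl ⟨Sum.inl x, hSmemL x hx, rfl⟩, by simp⟩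
        · have hxD : x ∈ D := by rw [hD, Finset.mem_filter]; exact ⟨Finset.mem_univ x, hx⟩
          refine ⟨_, Or.inr (Or.inl ⟨⟨x, hxD⟩, rfl⟩), ?_⟩
          simp
      | Sum.inr y =>
        by_cases hy : y.val < b
        · exact ⟨⟨Sum.inr y, Sum.inr y, Walk.nil⟩, Or.inl ⟨Sum.inr y, hSmemR y hy, rfl⟩, by simp⟩
        · have hyD : y ∈ D' := by rw [hD', Finset.mem_filter]; exact ⟨Finset.mem_univ y, hy⟩
          refine ⟨_, Or.inr (Or.inr ⟨⟨y, hyD⟩, rfl⟩), ?_⟩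
          simp

lemma choose_two_succ (t : ℕ) : (t+1).choose 2 = t.choose 2 + t := by
  have m2 : (t+1).choose 2 = t.choose 1 + t.choose 2 := Nat.choose_succ_succ' t 1
  rw [Nat.choose_one_right] at m2
  omega

lemma choose_ge_imp (a t : ℕ) (h : a + 1 + t.choose 2 ≤ a.choose 2) : t + 2 ≤ a := by
  by_contra h'
  push_neg at h'
  have m1 : a.choose 2 ≤ (t+1).choose 2 := Nat.choose_le_choose 2 (by omega)
  have m2 := choose_two_succ t
  have hat : a ≤ t := by omega
  have m3 : a.choose 2 ≤ t.choose 2 := Nat.choose_le_choose 2 hat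
  omega

lemma arith_lower (k i A B n m : ℕ) (hi4 : 4 ≤ i) (hik4 : i + 4 ≤ k)
    (hn : k + (k-i-2).choose 2 ≤ n) (hm : k + (i-2).choose 2 ≤ m)
    (h1 : n ≤ A + B.choose 2) (h2 : m ≤ B + A.choose 2) : k ≤ A + B := by
  by_contra h
  push_neg at h
  have hA : i ≤ A := by
    have hh : A + 1 + (i-2).choose 2 ≤ A.choose 2 := by omega
    have := choose_ge_imp A (i-2) hh
    omega
  have hB : k - i ≤ B := by
    have hh : B + 1 + (k-i-2).choose 2 ≤ B.choose 2 := by omega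
    have := choose_ge_imp B (k-i-2) hh
    omega
  omega

open scoped Classical in
lemma ncard_decomp {n m : ℕ} (S : Set (Fin n ⊕ Fin m)) :
    S.ncard = (Finset.univ.filter fun x : Fin n => Sum.inl x ∈ S).card
      + (Finset.univ.filter fun y : Fin m => Sum.inr y ∈ S).card := by
  classical
  have hfin : S.Finite := Set.toFinite S
  rw [Set.ncard_eq_toFinset_card _ hfin]
  have he : hfin.toFinset = ((Finset.univ.filter fun x : Fin n => Sum.inl x ∈ S).image Sum.inl)
      ∪ ((Finset.univ.filter fun y : Fin m => Sum.inr y ∈ S).image Sum.inr) := by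
    ext z
    cases z <;> simp [Set.Finite.mem_toFinset]
  rw [he, Finset.card_union_of_disjoint, Finset.card_image_of_injective _ Sum.inl_injective,
    Finset.card_image_of_injective _ Sum.inr_injective]
  rw [Finset.disjoint_left]
  rintro z hz hz'
  simp only [Finset.mem_image] at hz hz'
  obtain ⟨x, -, rfl⟩ := hz
  obtain ⟨y, -, hy⟩ := hz'
  simp at hy


end SGhelpers

open SimpleGraph Sum in
theorem sg_eq_of_rectangle (k i n m : ℕ) (hk : 3 ≤ k) (hik : i ≤ k)
    (hi4 : 4 ≤ i) (hik4 : i ≤ k - 4)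
    (hm1 : sgF k (i - 1) < m) (hm2 : m ≤ sgF k i)
    (hn1 : sgF k (k - i - 1) < n) (hn2 : n ≤ sgF k (k - i)) :
    strongGeodeticNumber (completeBipartiteGraph (Fin n) (Fin m)) = k := by
  have hk8 : 8 ≤ k := by omega
  have hki4 : 4 ≤ k - i := by omega
  -- unfold the sgF bounds
  rw [sgF, show max (i - 1 - 1) 2 = i - 2 by omega] at hm1
  rw [sgF, show max (i - 1) 2 = i - 1 by omega] at hm2
  rw [sgF, show max (k - i - 1 - 1) 2 = k - i - 2 by omega] at hn1
  rw [sgF, show max (k - i - 1) 2 = k - i - 1 by omega] at hn2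
  have hm1' : k + (i-2).choose 2 ≤ m := by omega
  have hn1' : k + (k-i-2).choose 2 ≤ n := by omega
  have hci : i.choose 2 = (i-1).choose 2 + (i-1) := by
    have := choose_two_succ (i-1)
    rw [show i - 1 + 1 = i by omega] at this
    omega
  have hcki : (k-i).choose 2 = (k-i-1).choose 2 + (k-i-1) := by
    have := choose_two_succ (k-i-1)
    rw [show k - i - 1 + 1 = k - i by omega] at this
    omega
  have hm2' : m ≤ (k - i) + i.choose 2 := by omega
  have hn2' : n ≤ i + (k - i).choose 2 := by omega
  have hn0 : 0 < n := by omega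
  have hm0 : 0 < m := by omega
  obtain ⟨S, hScard, hSsg⟩ := upper (n := n) (m := m) (a := i) (b := k - i)
    (by omega) (by omega) (by omega) (by omega) hn2' hm2'
  have hmem : k ∈ {j | ∃ S : Set (Fin n ⊕ Fin m), S.ncard = j ∧
      IsStrongGeodeticSet (completeBipartiteGraph (Fin n) (Fin m)) S} := by
    refine ⟨S, ?_, hSsg⟩
    rw [hScard]
    omega
  refine le_antisymm (Nat.sInf_le hmem) (le_csInf ⟨k, hmem⟩ ?_)
  rintro j ⟨T, hTcard, hTsg⟩
  classical
  have h1 := lower_left hn0 hm0 hTsg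
  have h2 := lower_right hn0 hm0 hTsg
  have h3 := ncard_decomp T
  rw [hTcard] at h3
  have := arith_lower k i
    ((Finset.univ.filter fun x : Fin n => Sum.inl x ∈ T).card)
    ((Finset.univ.filter fun y : Fin m => Sum.inr y ∈ T).card)
    n m hi4 (by omega) hn1' hm1' h1 h2
  omega
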